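/- Let G be a finite simple undirected graph with at least one edge, every vertex of degree at least 1, and not regular (so σ_O > 0 and σ_ID > 0). Define the inversity ρ = C/(σ_O·σ_ID), where C = (1/(2|E|))·Σ_{(i,j)∈Ê} (D_i − μ_O)·(1/D_j − 1/μ_D) is the covariance, σ_O² and σ_ID² the variances, and μ_O, 1/μ_D the means of the origin and inverse destination degree distributions over directed edges. Then μ_L = μ_G + ρ·√( ((κ₁·κ₃ − κ₂²)/κ₁) · (κ₋₁ − 1/κ₁) ). -/

import Mathlib

open Finset

variable {V : Type*}

/-- Set of neighbors of `v` as a `Finset` (classical). -/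
noncomputable def nbr (G : SimpleGraph V) [Fintype V] (v : V) : Finset V :=
  haveI := Classical.decRel G.Adj
  G.neighborFinset v

/-- Degree of vertex `v`: number of its neighbors. -/
noncomputable def deg (G : SimpleGraph V) [Fintype V] (v : V) : ℕ :=
  (nbr G v).card

/-- Average degree of the friends of `v`. -/
noncomputable def friendAvg (G : SimpleGraph V) [Fintype V] (v : V) : ℝ :=
  (∑ j ∈ nbr G v, (deg G j : ℝ)) / (deg G v : ℝ)

/-- Mean degree of the network. -/
noncomputable def meanDeg (G : SimpleGraph V) [Fintype V] : ℝ :=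
  (∑ i : V, (deg G i : ℝ)) / (Fintype.card V : ℝ)

/-- Local mean: average over vertices of the average friend degree. -/
noncomputable def localMean (G : SimpleGraph V) [Fintype V] : ℝ :=
  (∑ i : V, friendAvg G i) / (Fintype.card V : ℝ)

/-- Global mean: total number of friends of friends over total number of friends. -/
noncomputable def globalMean (G : SimpleGraph V) [Fintype V] : ℝ :=
  (∑ i : V, ∑ j ∈ nbr G i, (deg G j : ℝ)) / (∑ i : V, (deg G i : ℝ))

/-- Number of (undirected) edges. -/
noncomputable def edgeCount (G : SimpleGraph V) [Fintype V] : ℕ :=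
  Nat.card G.edgeSet

/-- m-th moment of the degree distribution. -/
noncomputable def kappa (G : SimpleGraph V) [Fintype V] (m : ℤ) : ℝ :=
  (∑ i : V, (deg G i : ℝ) ^ m) / (Fintype.card V : ℝ)

lemma mem_nbr {G : SimpleGraph V} [Fintype V] {i j : V} : j ∈ nbr G i ↔ G.Adj i j := by
  simp only [nbr, SimpleGraph.mem_neighborFinset]

lemma nbr_comm {G : SimpleGraph V} [Fintype V] {i j : V} : j ∈ nbr G i ↔ i ∈ nbr G j := by
  simp [mem_nbr, SimpleGraph.adj_comm]

lemma sum_nbr_comm (G : SimpleGraph V) [Fintype V] (f : V → V → ℝ) :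
    ∑ i : V, ∑ j ∈ nbr G i, f i j = ∑ j : V, ∑ i ∈ nbr G j, f i j := by
  classical
  have key : ∀ g : V → V → ℝ, ∀ i : V,
      ∑ j ∈ nbr G i, g i j = ∑ j : V, if j ∈ nbr G i then g i j else 0 := by
    intro g i
    rw [Finset.sum_ite_mem, Finset.univ_inter]
  rw [Finset.sum_congr rfl fun i _ => key f i, Finset.sum_comm]
  refine Finset.sum_congr rfl fun j _ => ?_
  rw [key (fun j i => f i j) j]
  refine Finset.sum_congr rfl fun i _ => ?_
  simp only [nbr_comm (i := i) (j := j)]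

lemma dsum_const (G : SimpleGraph V) [Fintype V] (g : V → ℝ) :
    ∑ i : V, ∑ _j ∈ nbr G i, g i = ∑ i : V, (deg G i : ℝ) * g i := by
  simp [Finset.sum_const, deg, nsmul_eq_mul]

lemma sum_nbr_right (G : SimpleGraph V) [Fintype V] (g : V → ℝ) :
    ∑ i : V, ∑ j ∈ nbr G i, g j = ∑ j : V, (deg G j : ℝ) * g j := by
  rw [sum_nbr_comm G (fun _ j => g j)]
  exact dsum_const G g

lemma handshake (G : SimpleGraph V) [Fintype V] :
    ∑ i : V, (deg G i : ℝ) = 2 * (edgeCount G : ℝ) := by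
  classical
  have hdeg : ∀ v, deg G v = G.degree v := by
    intro v
    unfold deg SimpleGraph.degree
    congr 1
  have h := SimpleGraph.sum_degrees_eq_twice_card_edges G
  have h2 : edgeCount G = G.edgeFinset.card := by
    rw [edgeCount, Nat.card_eq_fintype_card, SimpleGraph.edgeFinset_card]
  simp only [hdeg, h2]
  exact_mod_cast h

lemma alg (n s1 s2 s3 sm1 T : ℝ) (hn : 0 < n) (hs1 : 0 < s1)
    (hA : 0 < s3 - 2*(s2/s1)*s2 + (s2/s1)^2*s1)
    (hB : 0 < sm1 - 2*(n/s1)*n + (n/s1)^2*s1) :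
    T/n = s2/s1 +
      ((T - (n/s1)*s2 - (s2/s1)*n + (s2/s1)*(n/s1)*s1)/s1) /
        (Real.sqrt ((s3 - 2*(s2/s1)*s2 + (s2/s1)^2*s1)/s1) *
         Real.sqrt ((sm1 - 2*(n/s1)*n + (n/s1)^2*s1)/s1)) *
      Real.sqrt (((s1/n * (s3/n) - (s2/n)^2)/(s1/n)) * (sm1/n - n/s1)) := by
  set A := s3 - 2*(s2/s1)*s2 + (s2/s1)^2*s1 with hAdef
  set B := sm1 - 2*(n/s1)*n + (n/s1)^2*s1 with hBdef
  have harg : ((s1/n * (s3/n) - (s2/n)^2)/(s1/n)) * (sm1/n - n/s1) = (A/n)*(B/n) := by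
    rw [hAdef, hBdef]; field_simp; ring
  rw [harg, Real.sqrt_mul (by positivity), Real.sqrt_div hA.le, Real.sqrt_div hB.le,
      Real.sqrt_div hA.le, Real.sqrt_div hB.le]
  have ha : 0 < Real.sqrt A := Real.sqrt_pos.mpr hA
  have hb : 0 < Real.sqrt B := Real.sqrt_pos.mpr hB
  have hrs : Real.sqrt s1 * Real.sqrt s1 = s1 := Real.mul_self_sqrt hs1.le
  have hrn : Real.sqrt n * Real.sqrt n = n := Real.mul_self_sqrt hn.le
  have hrspos : 0 < Real.sqrt s1 := Real.sqrt_pos.mpr hs1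
  have hrnpos : 0 < Real.sqrt n := Real.sqrt_pos.mpr hn
  set a := Real.sqrt A
  set b := Real.sqrt B
  set rs := Real.sqrt s1
  set rn := Real.sqrt n
  rw [← hrs, ← hrn]
  field_simp
  ring

/-- Inversity identity: for a non-regular graph (so `σ_O > 0` and `σ_ID > 0`), with
inversity `ρ = C/(σ_O σ_ID)` where `C` is the covariance between the origin degree
distribution and the inverse destination degree distribution over directed edges,
`μ_L = μ_G + ρ √(((κ₁κ₃ - κ₂²)/κ₁)(κ₋₁ - 1/κ₁))`. -/
theorem stmt10 {V : Type*} [Fintype V] (G : SimpleGraph V) (hE : G.edgeSet.Nonempty)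
    (hdeg : ∀ v : V, 1 ≤ deg G v)
    (hreg : ¬ ∀ v w : V, deg G v = deg G w) :
    let E2 : ℝ := 2 * (edgeCount G : ℝ)
    let μO : ℝ := kappa G 2 / kappa G 1
    let C : ℝ := (∑ i : V, ∑ j ∈ nbr G i,
        ((deg G i : ℝ) - μO) * (1 / (deg G j : ℝ) - 1 / meanDeg G)) / E2
    let σO : ℝ := Real.sqrt
        ((∑ i : V, ∑ _j ∈ nbr G i, ((deg G i : ℝ) - μO) ^ 2) / E2)
    let σID : ℝ := Real.sqrt
        ((∑ i : V, ∑ j ∈ nbr G i, (1 / (deg G j : ℝ) - 1 / meanDeg G) ^ 2) / E2)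
    let ρ : ℝ := C / (σO * σID)
    localMean G = globalMean G + ρ * Real.sqrt
        (((kappa G 1 * kappa G 3 - (kappa G 2) ^ 2) / kappa G 1) *
          (kappa G (-1) - 1 / kappa G 1)) := by
  classical
  intro E2 μO C σO σID ρ
  simp only [ρ, C, σO, σID, μO, E2]
  -- notation
  have hVne : Nonempty V := by
    obtain ⟨e, he⟩ := hE
    induction e using Sym2.ind with
    | _ x y => exact ⟨x⟩
  have hd : ∀ i : V, (0:ℝ) < (deg G i : ℝ) := by
    intro i
    have h1 : (1:ℝ) ≤ (deg G i : ℝ) := by exact_mod_cast hdeg i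
    linarith
  have hdne : ∀ i : V, (deg G i : ℝ) ≠ 0 := fun i => (hd i).ne'
  have hn : (0:ℝ) < (Fintype.card V : ℝ) := by
    have := Fintype.card_pos (α := V)
    exact_mod_cast this
  have hs1 : (0:ℝ) < ∑ i : V, (deg G i : ℝ) :=
    Finset.sum_pos (fun i _ => hd i) Finset.univ_nonempty
  -- kappa values
  have hk1 : kappa G 1 = (∑ i : V, (deg G i : ℝ)) / (Fintype.card V : ℝ) := by
    unfold kappa
    congr 1
    exact Finset.sum_congr rfl fun i _ => by norm_num
  have hk2 : kappa G 2 = (∑ i : V, (deg G i : ℝ)^2) / (Fintype.card V : ℝ) := by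
    unfold kappa
    congr 1
  have hk3 : kappa G 3 = (∑ i : V, (deg G i : ℝ)^3) / (Fintype.card V : ℝ) := by
    unfold kappa
    congr 1
  have hkm1 : kappa G (-1) = (∑ i : V, 1/(deg G i : ℝ)) / (Fintype.card V : ℝ) := by
    unfold kappa
    congr 1
    exact Finset.sum_congr rfl fun i _ => by simp
  have hμO : kappa G 2 / kappa G 1
      = (∑ i : V, (deg G i : ℝ)^2) / (∑ i : V, (deg G i : ℝ)) := by
    rw [hk1, hk2]
    field_simp
  have hmD : meanDeg G = (∑ i : V, (deg G i : ℝ)) / (Fintype.card V : ℝ) := rfl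
  have hE2v : 2 * (edgeCount G : ℝ) = ∑ i : V, (deg G i : ℝ) := (handshake G).symm
  -- abbreviations (as plain terms)
  -- local mean
  have hL : localMean G
      = (∑ i : V, ∑ j ∈ nbr G i, (deg G i : ℝ) / (deg G j : ℝ))
          / (Fintype.card V : ℝ) := by
    unfold localMean friendAvg
    congr 1
    rw [sum_nbr_comm G (fun i j => (deg G i : ℝ) / (deg G j : ℝ))]
    exact Finset.sum_congr rfl fun j _ => Finset.sum_div _ _ _
  have hGm : globalMean G
      = (∑ i : V, (deg G i : ℝ)^2) / (∑ i : V, (deg G i : ℝ)) := by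
    unfold globalMean
    congr 1
    rw [sum_nbr_right G (fun j => (deg G j : ℝ))]
    exact Finset.sum_congr rfl fun j _ => by ring
  -- shorthand for the five basic sums (written out below)
  -- A: weighted variance of degrees
  have hAid : ∑ i : V, (deg G i : ℝ) *
        ((deg G i : ℝ) - (∑ i : V, (deg G i : ℝ)^2) / (∑ i : V, (deg G i : ℝ)))^2
      = (∑ i : V, (deg G i : ℝ)^3)
        - 2*((∑ i : V, (deg G i : ℝ)^2) / (∑ i : V, (deg G i : ℝ)))*(∑ i : V, (deg G i : ℝ)^2)
        + ((∑ i : V, (deg G i : ℝ)^2) / (∑ i : V, (deg G i : ℝ)))^2*(∑ i : V, (deg G i : ℝ)) := by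
    set c : ℝ := (∑ i : V, (deg G i : ℝ)^2) / (∑ i : V, (deg G i : ℝ)) with hc
    calc ∑ i : V, (deg G i : ℝ) * ((deg G i : ℝ) - c)^2
        = ∑ i : V, ((deg G i : ℝ)^3 - 2*c*(deg G i : ℝ)^2 + c^2*(deg G i : ℝ)) :=
          Finset.sum_congr rfl fun i _ => by ring
      _ = (∑ i : V, (deg G i : ℝ)^3) - 2*c*(∑ i : V, (deg G i : ℝ)^2)
            + c^2*(∑ i : V, (deg G i : ℝ)) := by
          rw [Finset.sum_add_distrib, Finset.sum_sub_distrib, ← Finset.mul_sum, ← Finset.mul_sum]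
  have hBid : ∑ i : V, (deg G i : ℝ) *
        (1 / (deg G i : ℝ) - (Fintype.card V : ℝ) / (∑ i : V, (deg G i : ℝ)))^2
      = (∑ i : V, 1/(deg G i : ℝ))
        - 2*((Fintype.card V : ℝ) / (∑ i : V, (deg G i : ℝ)))*(Fintype.card V : ℝ)
        + ((Fintype.card V : ℝ) / (∑ i : V, (deg G i : ℝ)))^2*(∑ i : V, (deg G i : ℝ)) := by
    set c : ℝ := (Fintype.card V : ℝ) / (∑ i : V, (deg G i : ℝ)) with hc
    calc ∑ i : V, (deg G i : ℝ) * (1 / (deg G i : ℝ) - c)^2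
        = ∑ i : V, (1/(deg G i : ℝ) - 2*c + c^2*(deg G i : ℝ)) :=
          Finset.sum_congr rfl fun i _ => by
            have h := hdne i
            field_simp
            ring
      _ = (∑ i : V, 1/(deg G i : ℝ)) - 2*(∑ _i : V, c) + c^2*(∑ i : V, (deg G i : ℝ)) := by
          rw [Finset.sum_add_distrib, Finset.sum_sub_distrib, ← Finset.mul_sum, ← Finset.mul_sum]
      _ = (∑ i : V, 1/(deg G i : ℝ)) - 2*c*(Fintype.card V : ℝ)
            + c^2*(∑ i : V, (deg G i : ℝ)) := by
          rw [Finset.sum_const, Finset.card_univ, nsmul_eq_mul]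
          ring
  -- positivity of the variances
  have hApos : 0 < ∑ i : V, (deg G i : ℝ) *
      ((deg G i : ℝ) - (∑ i : V, (deg G i : ℝ)^2) / (∑ i : V, (deg G i : ℝ)))^2 := by
    set c : ℝ := (∑ i : V, (deg G i : ℝ)^2) / (∑ i : V, (deg G i : ℝ)) with hc
    have hnn : ∀ i ∈ Finset.univ (α := V), 0 ≤ (deg G i : ℝ) * ((deg G i : ℝ) - c)^2 :=
      fun i _ => by positivity
    refine lt_of_le_of_ne (Finset.sum_nonneg hnn) fun h => ?_
    have hz := (Finset.sum_eq_zero_iff_of_nonneg hnn).mp h.symm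
    apply hreg
    have hall : ∀ u : V, (deg G u : ℝ) = c := by
      intro u
      have hu := hz u (Finset.mem_univ u)
      rcases mul_eq_zero.mp hu with h' | h'
      · exact absurd h' (hdne u)
      · have := (pow_eq_zero_iff two_ne_zero).mp h'
        linarith [sub_eq_zero.mp this]
    intro v w
    have : (deg G v : ℝ) = (deg G w : ℝ) := by rw [hall v, hall w]
    exact_mod_cast this
  have hBpos : 0 < ∑ i : V, (deg G i : ℝ) *
      (1 / (deg G i : ℝ) - (Fintype.card V : ℝ) / (∑ i : V, (deg G i : ℝ)))^2 := by
    set c : ℝ := (Fintype.card V : ℝ) / (∑ i : V, (deg G i : ℝ)) with hc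
    have hnn : ∀ i ∈ Finset.univ (α := V), 0 ≤ (deg G i : ℝ) * (1/(deg G i : ℝ) - c)^2 :=
      fun i _ => by positivity
    refine lt_of_le_of_ne (Finset.sum_nonneg hnn) fun h => ?_
    have hz := (Finset.sum_eq_zero_iff_of_nonneg hnn).mp h.symm
    apply hreg
    have hall : ∀ u : V, 1 / (deg G u : ℝ) = c := by
      intro u
      have hu := hz u (Finset.mem_univ u)
      rcases mul_eq_zero.mp hu with h' | h'
      · exact absurd h' (hdne u)
      · have := (pow_eq_zero_iff two_ne_zero).mp h'
        linarith [sub_eq_zero.mp this]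
    intro v w
    have h1 : 1 / (deg G v : ℝ) = 1 / (deg G w : ℝ) := by rw [hall v, hall w]
    rw [one_div, one_div, inv_inj] at h1
    exact_mod_cast h1
  -- double-sum forms of variances
  have hAN : (∑ i : V, ∑ _j ∈ nbr G i,
        ((deg G i : ℝ) - (∑ i : V, (deg G i : ℝ)^2) / (∑ i : V, (deg G i : ℝ)))^2)
      = (∑ i : V, (deg G i : ℝ)^3)
        - 2*((∑ i : V, (deg G i : ℝ)^2) / (∑ i : V, (deg G i : ℝ)))*(∑ i : V, (deg G i : ℝ)^2)
        + ((∑ i : V, (deg G i : ℝ)^2) / (∑ i : V, (deg G i : ℝ)))^2*(∑ i : V, (deg G i : ℝ)) := by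
    rw [dsum_const G
      (fun i => ((deg G i : ℝ) - (∑ i : V, (deg G i : ℝ)^2) / (∑ i : V, (deg G i : ℝ)))^2)]
    exact hAid
  have hBN : (∑ i : V, ∑ j ∈ nbr G i,
        (1 / (deg G j : ℝ) - (Fintype.card V : ℝ) / (∑ i : V, (deg G i : ℝ)))^2)
      = (∑ i : V, 1/(deg G i : ℝ))
        - 2*((Fintype.card V : ℝ) / (∑ i : V, (deg G i : ℝ)))*(Fintype.card V : ℝ)
        + ((Fintype.card V : ℝ) / (∑ i : V, (deg G i : ℝ)))^2*(∑ i : V, (deg G i : ℝ)) := by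
    rw [sum_nbr_right G
      (fun j => (1 / (deg G j : ℝ) - (Fintype.card V : ℝ) / (∑ i : V, (deg G i : ℝ)))^2)]
    exact hBid
  -- covariance numerator
  have hSa : ∑ i : V, ∑ j ∈ nbr G i, (deg G i : ℝ) * (1 / (deg G j : ℝ))
      = ∑ i : V, ∑ j ∈ nbr G i, (deg G i : ℝ) / (deg G j : ℝ) :=
    Finset.sum_congr rfl fun i _ => Finset.sum_congr rfl fun j _ => mul_one_div _ _
  have hSb : ∑ i : V, ∑ _j ∈ nbr G i,
        ((Fintype.card V : ℝ) / (∑ i : V, (deg G i : ℝ))) * (deg G i : ℝ)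
      = ((Fintype.card V : ℝ) / (∑ i : V, (deg G i : ℝ))) * (∑ i : V, (deg G i : ℝ)^2) := by
    rw [dsum_const G
      (fun i => ((Fintype.card V : ℝ) / (∑ i : V, (deg G i : ℝ))) * (deg G i : ℝ)),
      Finset.mul_sum]
    exact Finset.sum_congr rfl fun i _ => by ring
  have hSc : ∑ i : V, ∑ j ∈ nbr G i,
        ((∑ i : V, (deg G i : ℝ)^2) / (∑ i : V, (deg G i : ℝ))) * (1 / (deg G j : ℝ))
      = ((∑ i : V, (deg G i : ℝ)^2) / (∑ i : V, (deg G i : ℝ))) * (Fintype.card V : ℝ) := by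
    rw [sum_nbr_right G
      (fun j => ((∑ i : V, (deg G i : ℝ)^2) / (∑ i : V, (deg G i : ℝ))) * (1 / (deg G j : ℝ)))]
    set c : ℝ := (∑ i : V, (deg G i : ℝ)^2) / (∑ i : V, (deg G i : ℝ)) with hc
    calc ∑ j : V, (deg G j : ℝ) * (c * (1 / (deg G j : ℝ)))
        = ∑ _j : V, c := Finset.sum_congr rfl fun j _ => by
            have h := hdne j
            field_simp
      _ = c * (Fintype.card V : ℝ) := by
          rw [Finset.sum_const, Finset.card_univ, nsmul_eq_mul, mul_comm]
  have hSd : ∑ i : V, ∑ _j ∈ nbr G i,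
        (((∑ i : V, (deg G i : ℝ)^2) / (∑ i : V, (deg G i : ℝ)))
          * ((Fintype.card V : ℝ) / (∑ i : V, (deg G i : ℝ))))
      = (((∑ i : V, (deg G i : ℝ)^2) / (∑ i : V, (deg G i : ℝ)))
          * ((Fintype.card V : ℝ) / (∑ i : V, (deg G i : ℝ)))) * (∑ i : V, (deg G i : ℝ)) := by
    rw [dsum_const G
      (fun _ => ((∑ i : V, (deg G i : ℝ)^2) / (∑ i : V, (deg G i : ℝ)))
        * ((Fintype.card V : ℝ) / (∑ i : V, (deg G i : ℝ)))), ← Finset.sum_mul]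
    ring
  have hCN : (∑ i : V, ∑ j ∈ nbr G i,
        ((deg G i : ℝ) - (∑ i : V, (deg G i : ℝ)^2) / (∑ i : V, (deg G i : ℝ)))
          * (1 / (deg G j : ℝ) - (Fintype.card V : ℝ) / (∑ i : V, (deg G i : ℝ))))
      = (∑ i : V, ∑ j ∈ nbr G i, (deg G i : ℝ) / (deg G j : ℝ))
        - ((Fintype.card V : ℝ) / (∑ i : V, (deg G i : ℝ))) * (∑ i : V, (deg G i : ℝ)^2)
        - ((∑ i : V, (deg G i : ℝ)^2) / (∑ i : V, (deg G i : ℝ))) * (Fintype.card V : ℝ)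
        + ((∑ i : V, (deg G i : ℝ)^2) / (∑ i : V, (deg G i : ℝ)))
            * ((Fintype.card V : ℝ) / (∑ i : V, (deg G i : ℝ))) * (∑ i : V, (deg G i : ℝ)) := by
    calc (∑ i : V, ∑ j ∈ nbr G i,
          ((deg G i : ℝ) - (∑ i : V, (deg G i : ℝ)^2) / (∑ i : V, (deg G i : ℝ)))
            * (1 / (deg G j : ℝ) - (Fintype.card V : ℝ) / (∑ i : V, (deg G i : ℝ))))
        = ∑ i : V, ∑ j ∈ nbr G i,
            ((deg G i : ℝ) * (1 / (deg G j : ℝ))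
              - ((Fintype.card V : ℝ) / (∑ i : V, (deg G i : ℝ))) * (deg G i : ℝ)
              - ((∑ i : V, (deg G i : ℝ)^2) / (∑ i : V, (deg G i : ℝ))) * (1 / (deg G j : ℝ))
              + (((∑ i : V, (deg G i : ℝ)^2) / (∑ i : V, (deg G i : ℝ)))
                  * ((Fintype.card V : ℝ) / (∑ i : V, (deg G i : ℝ))))) :=
          Finset.sum_congr rfl fun i _ => Finset.sum_congr rfl fun j _ => by ring
      _ = _ := by
          simp only [Finset.sum_add_distrib, Finset.sum_sub_distrib]
          rw [hSa, hSb, hSc, hSd]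
  -- put everything together
  rw [hL, hGm, hμO, hmD, hE2v, hk1, hk3, hk2, hkm1]
  simp only [one_div_div]
  rw [hCN, hAN, hBN]
  have hA := hAid ▸ hApos
  have hB := hBid ▸ hBpos
  have final := alg (Fintype.card V : ℝ) (∑ i : V, (deg G i : ℝ))
    (∑ i : V, (deg G i : ℝ)^2) (∑ i : V, (deg G i : ℝ)^3) (∑ i : V, 1/(deg G i : ℝ))
    (∑ i : V, ∑ j ∈ nbr G i, (deg G i : ℝ) / (deg G j : ℝ)) hn hs1 hA hB
  convert final using 2
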